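/- Let A, B ∈ Mₙ(ℂ) with n ≥ 2, tr(A) = tr(B), and suppose the linear map Φ(X) = AX + XB on Mₙ(ℂ) satisfies Φ(X) = tr(EX)·F for some fixed E, F ∈ Mₙ(ℂ) and all X. Then A = B = 0. -/

import Mathlib

open Matrix

theorem stmt8 (n : ℕ) (hn : 2 ≤ n) (A B E F : Matrix (Fin n) (Fin n) ℂ)
    (htr : A.trace = B.trace)
    (h : ∀ X : Matrix (Fin n) (Fin n) ℂ, A * X + X * B = (E * X).trace • F) :
    A = 0 ∧ B = 0 := by
  haveI : Nontrivial (Fin n) :=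
    ⟨⟨⟨0, by omega⟩, ⟨1, by omega⟩, by simp [Fin.ext_iff]⟩⟩
  -- entrywise consequence of applying `h` to a standard basis matrix
  have key : ∀ i j k l : Fin n,
      (if j = l then A k i else 0) + (if i = k then B j l else 0) = E j i * F k l := by
    intro i j k l
    have := congrFun (congrFun (h (Matrix.single i j 1)) k) l
    simp only [Matrix.add_apply, Matrix.mul_apply, Matrix.single, Matrix.trace,
      Matrix.diag, Matrix.smul_apply, smul_eq_mul, Matrix.of_apply, ite_and, mul_ite, ite_mul,
      mul_one, mul_zero, one_mul, zero_mul, Finset.sum_ite_eq, Finset.sum_ite_eq',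
      Finset.mem_univ, if_true] at this
    rcases eq_or_ne i k with rfl | hik
    · simpa using this
    · simpa [hik] using this
  have eq0 : ∀ i j k l : Fin n, i ≠ k → j ≠ l → E j i * F k l = 0 := by
    intro i j k l hik hjl
    have := key i j k l
    simpa [hik, hjl] using this.symm
  have eqA : ∀ i j k : Fin n, i ≠ k → A k i = E j i * F k j := by
    intro i j k hik
    have := key i j k j
    simpa [hik] using this
  have eqB : ∀ i j l : Fin n, j ≠ l → B j l = E j i * F i l := by
    intro i j l hjl
    have := key i j i l
    simpa [hjl] using this
  -- off-diagonal entries of A vanish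
  have hA0 : ∀ i k : Fin n, i ≠ k → A k i = 0 := by
    intro i k hik
    obtain ⟨j, j', hjj'⟩ := exists_pair_ne (Fin n)
    have hm : A k i * A k i = (E j i * F k j) * (E j' i * F k j') := by
      rw [← eqA i j k hik, ← eqA i j' k hik]
    have hz : (E j i * F k j) * (E j' i * F k j') = 0 := by
      have h1 : E j i * F k j' = 0 := eq0 i j k j' hik hjj'
      have h2 : E j' i * F k j = 0 := eq0 i j' k j hik hjj'.symm
      linear_combination (E j' i * F k j) * h1
    exact mul_self_eq_zero.mp (hm.trans hz)
  -- off-diagonal entries of B vanish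
  have hB0 : ∀ j l : Fin n, j ≠ l → B j l = 0 := by
    intro j l hjl
    obtain ⟨i, i', hii'⟩ := exists_pair_ne (Fin n)
    have hm : B j l * B j l = (E j i * F i l) * (E j i' * F i' l) := by
      rw [← eqB i j l hjl, ← eqB i' j l hjl]
    have hz : (E j i * F i l) * (E j i' * F i' l) = 0 := by
      have h1 : E j i * F i' l = 0 := eq0 i j i' l hii' hjl
      have h2 : E j i' * F i l = 0 := eq0 i' j i l hii'.symm hjl
      linear_combination (E j i' * F i l) * h1
    exact mul_self_eq_zero.mp (hm.trans hz)
  -- E j i * F k l = 0 unless (k,l) = (i,j)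
  have hEF : ∀ i j k l : Fin n, ¬(i = k ∧ j = l) → E j i * F k l = 0 := by
    intro i j k l hkl
    rcases eq_or_ne i k with rfl | hik
    · rcases eq_or_ne j l with rfl | hjl
      · exact absurd ⟨rfl, rfl⟩ hkl
      · rw [← eqB i j l hjl]; exact hB0 j l hjl
    · rcases eq_or_ne j l with rfl | hjl
      · rw [← eqA i j k hik]; exact hA0 i k hik
      · exact eq0 i j k l hik hjl
  have hd : ∀ i j : Fin n, A i i + B j j = E j i * F i j := by
    intro i j
    simpa using key i j i j
  -- diagonal relation
  have hdiag0 : ∀ i j : Fin n, A i i + B j j = 0 := by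
    intro i j
    rcases eq_or_ne (E j i) 0 with hE | hE
    · rw [hd i j, hE, zero_mul]
    · have hF : ∀ k l : Fin n, ¬(i = k ∧ j = l) → F k l = 0 := by
        intro k l hkl
        exact (mul_eq_zero.mp (hEF i j k l hkl)).resolve_left hE
      obtain ⟨i', hi'⟩ := exists_ne i
      obtain ⟨j', hj'⟩ := exists_ne j
      have h1 : A i i + B j' j' = 0 := by
        rw [hd i j', hF i j' (by rintro ⟨-, rfl⟩; exact hj' rfl), mul_zero]
      have h2 : A i' i' + B j j = 0 := by
        rw [hd i' j, hF i' j (by rintro ⟨rfl, -⟩; exact hi' rfl), mul_zero]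
      have h3 : A i' i' + B j' j' = 0 := by
        rw [hd i' j', hF i' j' (by rintro ⟨rfl, -⟩; exact hi' rfl), mul_zero]
      linear_combination h1 + h2 - h3
  -- diagonal entries are constant
  obtain ⟨i0⟩ : Nonempty (Fin n) := inferInstance
  have hAi : ∀ i : Fin n, A i i = A i0 i0 := by
    intro i
    have h1 := hdiag0 i i0
    have h2 := hdiag0 i0 i0
    linear_combination h1 - h2
  have hBi : ∀ j : Fin n, B j j = - A i0 i0 := by
    intro j
    have h1 := hdiag0 i0 j
    linear_combination h1
  have htrA : A.trace = (n : ℂ) * A i0 i0 := by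
    rw [Matrix.trace]
    calc ∑ i, A.diag i = ∑ _i : Fin n, A i0 i0 :=
          Finset.sum_congr rfl (fun i _ => hAi i)
      _ = (n : ℂ) * A i0 i0 := by
          simp [Finset.sum_const, Finset.card_univ, nsmul_eq_mul]
  have htrB : B.trace = (n : ℂ) * (- A i0 i0) := by
    rw [Matrix.trace]
    calc ∑ i, B.diag i = ∑ _i : Fin n, - A i0 i0 :=
          Finset.sum_congr rfl (fun i _ => hBi i)
      _ = (n : ℂ) * (- A i0 i0) := by
          simp [Finset.sum_const, Finset.card_univ, nsmul_eq_mul]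
  have hn0 : (n : ℂ) ≠ 0 := Nat.cast_ne_zero.mpr (by omega)
  have ha0 : A i0 i0 = 0 := by
    have heq : (n : ℂ) * A i0 i0 = (n : ℂ) * (- A i0 i0) := by
      rw [← htrA, ← htrB]; exact htr
    have := mul_left_cancel₀ hn0 heq
    linear_combination this / 2
  constructor
  · ext k l
    rcases eq_or_ne l k with rfl | hlk
    · simpa [ha0] using hAi l
    · simpa using hA0 l k hlk
  · ext k l
    rcases eq_or_ne k l with rfl | hkl
    · simpa [ha0] using hBi k
    · simpa using hB0 k l hkl
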